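/- Let F → E → B be a fibration of path-connected CW-complexes. Then TC(E) + 1 ≤ (cat(B × B) + 1)(TC(F) + 1). -/

import Mathlib

open unitInterval Set ContinuousMap

universe u

/-- `X` admits a cover by `n+1` open sets, each contractible in `X`. -/
def NullCover (X : Type*) [TopologicalSpace X] (n : ℕ) : Prop :=
  ∃ U : Fin (n + 1) → Set X, (∀ i, IsOpen (U i)) ∧ (⋃ i, U i) = Set.univ ∧
    ∀ i, (⟨Subtype.val, continuous_subtype_val⟩ : C(U i, X)).Nullhomotopic

/-- The (reduced) Lusternik-Schnirelmann category, as an extended natural number. -/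
noncomputable def LScat (X : Type*) [TopologicalSpace X] : ℕ∞ :=
  sInf ((fun n : ℕ => (n : ℕ∞)) '' {n : ℕ | NullCover X n})

/-- `X × X` admits a cover by `n+1` open sets, on each of which the free path
fibration `ev₀,₁ : Xᴵ → X × X` admits a continuous section. -/
def TCCover (X : Type*) [TopologicalSpace X] (n : ℕ) : Prop :=
  ∃ U : Fin (n + 1) → Set (X × X), (∀ i, IsOpen (U i)) ∧ (⋃ i, U i) = Set.univ ∧
    ∀ i, ∃ s : C(U i, C(I, X)),
      ∀ p : U i, (s p) 0 = (p : X × X).1 ∧ (s p) 1 = (p : X × X).2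

/-- Farber's (reduced) topological complexity, as an extended natural number. -/
noncomputable def TopComplexity (X : Type*) [TopologicalSpace X] : ℕ∞ :=
  sInf ((fun n : ℕ => (n : ℕ∞)) '' {n : ℕ | TCCover X n})

/-- A Hurewicz fibration: a map with the homotopy lifting property with respect to
all spaces. -/
def IsHurewiczFibration {E B : Type u} [TopologicalSpace E] [TopologicalSpace B]
    (p : C(E, B)) : Prop :=
  ∀ (Z : Type u) [TopologicalSpace Z] (h₀ : C(Z, E)) (H : C(Z × I, B)),
    (∀ z, H (z, 0) = p (h₀ z)) →
    ∃ G : C(Z × I, E), (∀ zt : Z × I, p (G zt) = H zt) ∧ ∀ z, G (z, 0) = h₀ z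

/-- `X` is a CW-complex: it is homeomorphic to the realization of a CW-complex
structure in the sense of Mathlib. -/
def HasCWStructure (X : Type u) [TopologicalSpace X] : Prop :=
  ∃ (Y : TopCat.{u}) (_ : TopCat.CWComplex.{u} Y), Nonempty (↑Y ≃ₜ X)

theorem tcCover_of_fibration {E B : Type u} [TopologicalSpace E] [TopologicalSpace B]
    (p : C(E, B)) (b₀ : B) (hp : IsHurewiczFibration p) [PathConnectedSpace B]
    {n m : ℕ} (hn : NullCover (B × B) n) (hm : TCCover ↑(p ⁻¹' {b₀}) m) :
    TCCover E (n * m + n + m) := by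
  classical
  set F := ↥(p ⁻¹' {b₀}) with hFdef
  obtain ⟨U, hUo, hUc, hUn⟩ := hn
  obtain ⟨V, hVo, hVc, hVs⟩ := hm
  have hBB : PathConnectedSpace (B × B) :=
    ⟨⟨(b₀, b₀)⟩, fun x y => ⟨(PathConnectedSpace.somePath x.1 y.1).prod
      (PathConnectedSpace.somePath x.2 y.2)⟩⟩
  -- Step 1: nullhomotopy of the inclusion of each U i, ending at (b₀, b₀)
  have key : ∀ i : Fin (n + 1), ∃ H : C((↥(U i)) × I, B × B),
      (∀ u, H (u, 0) = (u : B × B)) ∧ ∀ u, H (u, 1) = (b₀, b₀) := by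
    intro i
    obtain ⟨y, ⟨H0⟩⟩ := hUn i
    obtain ⟨γ⟩ : Joined y (b₀, b₀) := hBB.joined _ _
    have K : (ContinuousMap.const (↥(U i)) y).Homotopy
        (ContinuousMap.const (↥(U i)) (b₀, b₀)) :=
      { toFun := fun q => γ q.1
        continuous_toFun := γ.continuous.comp continuous_fst
        map_zero_left := fun _ => γ.source
        map_one_left := fun _ => γ.target }
    refine ⟨⟨fun q => (H0.trans K) (q.2, q.1), ?_⟩, fun u => ?_, fun u => ?_⟩
    · exact (H0.trans K).continuous.comp (continuous_snd.prodMk continuous_fst)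
    · exact (H0.trans K).apply_zero u
    · exact (H0.trans K).apply_one u
  -- Step 2: over each Z i := (p×p)⁻¹(U i), lift the nullhomotopy
  have main : ∀ i : Fin (n + 1),
      ∃ (Zi : Set (E × E)) (φ : C(↥Zi, F × F)) (g₁ g₂ : C(↥Zi × I, E)),
        IsOpen Zi ∧ (∀ e : E × E, (p e.1, p e.2) ∈ U i → e ∈ Zi) ∧
        (∀ z : ↥Zi, g₁ (z, 0) = z.val.1) ∧ (∀ z : ↥Zi, g₂ (z, 0) = z.val.2) ∧
        (∀ z : ↥Zi, ((φ z).1 : E) = g₁ (z, 1)) ∧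
        (∀ z : ↥Zi, ((φ z).2 : E) = g₂ (z, 1)) := by
    intro i
    obtain ⟨H, H0, H1⟩ := key i
    set Zi : Set (E × E) := (fun e : E × E => (p e.1, p e.2)) ⁻¹' (U i) with hZi
    have hZo : IsOpen Zi := (hUo i).preimage (by fun_prop)
    have hzc : Continuous fun z : ↥Zi => (⟨(p z.val.1, p z.val.2), z.prop⟩ : ↥(U i)) := by
      apply Continuous.subtype_mk; fun_prop
    set zmap : C(↥Zi, ↥(U i)) := ⟨_, hzc⟩ with hzmap
    obtain ⟨G₁, hG₁p, hG₁0⟩ := hp ↥Zi ⟨fun z => z.val.1, by fun_prop⟩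
      ⟨fun q => (H (zmap q.1, q.2)).1, by fun_prop⟩
      (fun z => by exact congrArg Prod.fst (H0 (zmap z)))
    obtain ⟨G₂, hG₂p, hG₂0⟩ := hp ↥Zi ⟨fun z => z.val.2, by fun_prop⟩
      ⟨fun q => (H (zmap q.1, q.2)).2, by fun_prop⟩
      (fun z => by exact congrArg Prod.snd (H0 (zmap z)))
    have hf₁ : ∀ z : ↥Zi, G₁ (z, 1) ∈ p ⁻¹' {b₀} := by
      intro z
      have := hG₁p (z, 1)
      simp only [mem_preimage, mem_singleton_iff]
      rw [this]
      exact congrArg Prod.fst (H1 (zmap z))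
    have hf₂ : ∀ z : ↥Zi, G₂ (z, 1) ∈ p ⁻¹' {b₀} := by
      intro z
      have := hG₂p (z, 1)
      simp only [mem_preimage, mem_singleton_iff]
      rw [this]
      exact congrArg Prod.snd (H1 (zmap z))
    refine ⟨Zi, ⟨fun z => (⟨G₁ (z, 1), hf₁ z⟩, ⟨G₂ (z, 1), hf₂ z⟩), ?_⟩, G₁, G₂,
      hZo, fun e he => he, fun z => hG₁0 z, fun z => hG₂0 z, fun z => rfl, fun z => rfl⟩
    apply Continuous.prodMk <;> apply Continuous.subtype_mk <;> fun_prop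
  choose Z φ g₁ g₂ hZo hZmem hg₁0 hg₂0 hφ₁ hφ₂ using main
  -- Step 3: the cover of E × E
  set W : Fin (n + 1) → Fin (m + 1) → Set (E × E) :=
    fun i j => Subtype.val '' ((φ i) ⁻¹' (V j)) with hW
  have hWo : ∀ i j, IsOpen (W i j) := fun i j =>
    (hZo i).isOpenMap_subtype_val _ ((hVo j).preimage (φ i).continuous)
  have hWz : ∀ i j (w : ↥(W i j)), w.val ∈ Z i := by
    rintro i j ⟨w, q, hq, rfl⟩; exact q.prop
  have hWv : ∀ i j (w : ↥(W i j)), φ i ⟨w.val, hWz i j w⟩ ∈ V j := by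
    rintro i j ⟨w, q, hq, rfl⟩
    have : q = ⟨q.val, hWz i j ⟨q.val, q, hq, rfl⟩⟩ := Subtype.ext rfl
    rwa [this] at hq
  -- Step 4: the sections
  have hsec : ∀ i j, ∃ s : C(W i j, C(I, E)),
      ∀ w : W i j, (s w) 0 = (w : E × E).1 ∧ (s w) 1 = (w : E × E).2 := by
    intro i j
    obtain ⟨sj, hsj⟩ := hVs j
    set z : ↥(W i j) → ↥(Z i) := fun w => ⟨w.val, hWz i j w⟩ with hz
    have hzc : Continuous z := Continuous.subtype_mk continuous_subtype_val _
    set v : ↥(W i j) → ↥(V j) := fun w => ⟨φ i (z w), hWv i j w⟩ with hv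
    have hvc : Continuous v := Continuous.subtype_mk ((φ i).continuous.comp hzc) _
    set γA : ∀ w : ↥(W i j), Path (w.val.1) (((φ i (z w)).1 : E)) := fun w =>
      { toFun := fun t => g₁ i (z w, t)
        continuous_toFun := (g₁ i).continuous.comp (by fun_prop)
        source' := hg₁0 i (z w)
        target' := (hφ₁ i (z w)).symm } with hγA
    set γB : ∀ w : ↥(W i j), Path (((φ i (z w)).1 : E)) (((φ i (z w)).2 : E)) := fun w =>
      { toFun := fun t => ((sj (v w)) t : E)
        continuous_toFun := continuous_subtype_val.comp (sj (v w)).continuous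
        source' := congrArg Subtype.val (hsj (v w)).1
        target' := congrArg Subtype.val (hsj (v w)).2 } with hγB
    set γC : ∀ w : ↥(W i j), Path (((φ i (z w)).2 : E)) (w.val.2) := fun w =>
      Path.symm
      { toFun := fun t => g₂ i (z w, t)
        continuous_toFun := (g₂ i).continuous.comp (by fun_prop)
        source' := hg₂0 i (z w)
        target' := (hφ₂ i (z w)).symm } with hγC
    set γ : ∀ w : ↥(W i j), Path (w.val.1) (w.val.2) := fun w =>
      (γA w).trans ((γB w).trans (γC w)) with hγ
    have hA : Continuous ↿γA := (g₁ i).continuous.comp (by fun_prop)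
    have hB : Continuous ↿γB := by
      have : Continuous fun q : ↥(W i j) × I => (sj (v q.1)) q.2 :=
        ((sj.continuous.comp hvc).comp continuous_fst).eval continuous_snd
      exact continuous_subtype_val.comp this
    have hC : Continuous ↿γC :=
      Path.symm_continuous_family _ ((g₂ i).continuous.comp (by fun_prop))
    have hγcont : Continuous ↿γ :=
      Path.trans_continuous_family γA hA _ (Path.trans_continuous_family γB hB γC hC)
    refine ⟨ContinuousMap.curry ⟨fun q => γ q.1 q.2, hγcont⟩, fun w => ?_⟩
    exact ⟨(γ w).source, (γ w).target⟩
  choose s hs using hsec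
  -- Step 5: assemble
  have hcard : n * m + n + m + 1 = (n + 1) * (m + 1) := by ring
  set idx : Fin (n * m + n + m + 1) → Fin (n + 1) × Fin (m + 1) :=
    fun k => finProdFinEquiv.symm (finCongr hcard k) with hidx
  refine ⟨fun k => W (idx k).1 (idx k).2, fun k => hWo _ _, ?_, fun k => ⟨s _ _, hs _ _⟩⟩
  rw [eq_univ_iff_forall]
  intro e
  have hpe : (p e.1, p e.2) ∈ ⋃ i, U i := hUc ▸ mem_univ _
  obtain ⟨i, hi⟩ := mem_iUnion.mp hpe
  have hez : e ∈ Z i := hZmem i e hi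
  have hφe : φ i ⟨e, hez⟩ ∈ ⋃ j, V j := hVc ▸ mem_univ _
  obtain ⟨j, hj⟩ := mem_iUnion.mp hφe
  refine mem_iUnion.mpr ⟨finCongr hcard.symm (finProdFinEquiv (i, j)), ?_⟩
  have : idx (finCongr hcard.symm (finProdFinEquiv (i, j))) = (i, j) := by
    simp only [hidx]
    have h2 : (finCongr hcard) ((finCongr hcard.symm) (finProdFinEquiv (i, j))) =
        finProdFinEquiv (i, j) := by ext; simp
    rw [h2, Equiv.symm_apply_apply]
  rw [this]
  exact ⟨⟨e, hez⟩, hj, rfl⟩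

/-- The Farber-Grant formula for a fibration `F → E → B` of path-connected
CW-complexes: `TC(E) + 1 ≤ (cat(B × B) + 1)(TC(F) + 1)`. -/
theorem tc_fibration {E B : Type u} [TopologicalSpace E] [TopologicalSpace B]
    (p : C(E, B)) (b₀ : B) (hp : IsHurewiczFibration p)
    [PathConnectedSpace E] [PathConnectedSpace B]
    [PathConnectedSpace ↑(p ⁻¹' {b₀})]
    (hE : HasCWStructure E) (hB : HasCWStructure B)
    (hF : HasCWStructure ↑(p ⁻¹' {b₀})) :
    TopComplexity E + 1 ≤ (LScat (B × B) + 1) * (TopComplexity ↑(p ⁻¹' {b₀}) + 1) := by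
  classical
  have hne1 : ∀ x : ℕ∞, x + 1 ≠ 0 := by
    intro x h
    have h2 : (1 : ℕ∞) ≤ 0 := h ▸ le_add_self
    simp at h2
  by_cases hS : {n : ℕ | NullCover (B × B) n}.Nonempty
  · by_cases hT : {m : ℕ | TCCover ↑(p ⁻¹' {b₀}) m}.Nonempty
    · set n := sInf {n : ℕ | NullCover (B × B) n} with hndef
      set m := sInf {m : ℕ | TCCover ↑(p ⁻¹' {b₀}) m} with hmdef
      have hn : NullCover (B × B) n := Nat.sInf_mem hS
      have hm : TCCover ↑(p ⁻¹' {b₀}) m := Nat.sInf_mem hT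
      have hcov := tcCover_of_fibration p b₀ hp hn hm
      have hTC : TopComplexity E ≤ ((n * m + n + m : ℕ) : ℕ∞) :=
        sInf_le ⟨n * m + n + m, hcov, rfl⟩
      have hLS : LScat (B × B) = (n : ℕ∞) := by
        refine le_antisymm (sInf_le ⟨n, hn, rfl⟩) (le_sInf ?_)
        rintro x ⟨k, hk, rfl⟩
        show (n : ℕ∞) ≤ (k : ℕ∞)
        exact_mod_cast Nat.sInf_le hk
      have hTCF : TopComplexity ↑(p ⁻¹' {b₀}) = (m : ℕ∞) := by
        refine le_antisymm (sInf_le ⟨m, hm, rfl⟩) (le_sInf ?_)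
        rintro x ⟨k, hk, rfl⟩
        show (m : ℕ∞) ≤ (k : ℕ∞)
        exact_mod_cast Nat.sInf_le hk
      rw [hLS, hTCF]
      calc TopComplexity E + 1 ≤ ((n * m + n + m : ℕ) : ℕ∞) + 1 := add_le_add_left hTC 1
        _ = ((n : ℕ∞) + 1) * ((m : ℕ∞) + 1) := by push_cast; ring
    · have h1 : TopComplexity ↑(p ⁻¹' {b₀}) = ⊤ := by
        rw [TopComplexity, Set.not_nonempty_iff_eq_empty.mp hT]
        simp
      rw [h1]
      have : (⊤ : ℕ∞) + 1 = ⊤ := by simp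
      rw [this, ENat.mul_top (hne1 _)]
      exact le_top
  · have h1 : LScat (B × B) = ⊤ := by
      rw [LScat, Set.not_nonempty_iff_eq_empty.mp hS]
      simp
    rw [h1]
    have : (⊤ : ℕ∞) + 1 = ⊤ := by simp
    rw [this, ENat.top_mul (hne1 _)]
    exact le_top
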